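/- arXiv:2603.29610 — 2 statements merged into one kernel-verified Lean document; each statement's English description precedes it below -/
import Mathlib

section
/- As formal power series, ∏_{i≥1} 1/(1 − d x^i) = ∏_{i≥1} 1/(1 − x^i)^{a_i}, where a_i = (1/i) ∑_{q | i} φ(q) d^{i/q} and φ is Euler's totient function. -/
open PowerSeries

/-- The necklace count: `a d i = (1/i) ∑_{q ∣ i} φ(q) d^(i/q)` (this sum is
divisible by `i`, so natural division is exact). -/
def necklaceCount (d i : ℕ) : ℕ :=
  (∑ q ∈ Nat.divisors i, Nat.totient q * d ^ (i / q)) / i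

open Finset

/-! ### Arithmetic part: the necklace divisibility -/

private lemma fermat_int (p : ℕ) (hp : p.Prime) (c : ℤ) : (p : ℤ) ∣ c ^ p - c := by
  haveI : Fact p.Prime := ⟨hp⟩
  have h : ((c ^ p - c : ℤ) : ZMod p) = 0 := by
    push_cast
    rw [ZMod.pow_card, sub_self]
  exact (ZMod.intCast_zmod_eq_zero_iff_dvd _ _).mp h

/-- The necklace sum over `ℤ`. -/
private def nsumZ (c : ℤ) (i : ℕ) : ℤ := ∑ q ∈ Nat.divisors i, (Nat.totient q : ℤ) * c ^ (i / q)

private lemma nsum_prime_pow_aux (p : ℕ) (hp : p.Prime) (c : ℤ) (n : ℕ) :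
    (p : ℤ) ^ n ∣ ∑ t ∈ range (n + 1), (Nat.totient (p ^ t) : ℤ) * c ^ (p ^ (n - t)) := by
  induction n with
  | zero => simp
  | succ n ih =>
    have key : ∑ t ∈ range (n + 2), (Nat.totient (p ^ t) : ℤ) * c ^ (p ^ (n + 1 - t))
        = (c ^ (p ^ (n + 1)) - c ^ (p ^ n))
          + p * ∑ t ∈ range (n + 1), (Nat.totient (p ^ t) : ℤ) * c ^ (p ^ (n - t)) := by
      rw [Finset.sum_range_succ', Finset.mul_sum]
      have h0 : (Nat.totient (p ^ 0) : ℤ) * c ^ (p ^ (n + 1 - 0)) = c ^ (p ^ (n + 1)) := by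
        simp
      rw [h0]
      have hterm : ∀ t ∈ range (n + 1),
          (Nat.totient (p ^ (t + 1)) : ℤ) * c ^ (p ^ (n + 1 - (t + 1)))
            = (p : ℤ) * ((Nat.totient (p ^ t) : ℤ) * c ^ (p ^ (n - t)))
              - (if t = 0 then c ^ (p ^ n) else 0) := by
        intro t _
        have hnt : n + 1 - (t + 1) = n - t := by omega
        rw [hnt]
        rcases Nat.eq_zero_or_pos t with rfl | ht
        · have h1 : Nat.totient (p ^ (0 + 1)) = p - 1 := by
            simp [Nat.totient_prime hp]
          have h2 : Nat.totient (p ^ 0) = 1 := by simp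
          rw [h1, h2, if_pos rfl]
          have : ((p - 1 : ℕ) : ℤ) = (p : ℤ) - 1 := by
            have := hp.one_lt
            push_cast [Nat.cast_sub (by omega : 1 ≤ p)]
            ring
          rw [this, Nat.sub_zero]
          ring
        · obtain ⟨s, rfl⟩ := Nat.exists_eq_succ_of_ne_zero ht.ne'
          have h1 : Nat.totient (p ^ (s + 1 + 1)) = p ^ (s + 1) * (p - 1) :=
            Nat.totient_prime_pow hp (by omega)
          have h2 : Nat.totient (p ^ (s + 1)) = p ^ s * (p - 1) :=
            Nat.totient_prime_pow hp (by omega)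
          rw [h1, h2, if_neg (by omega)]
          push_cast [Nat.cast_sub hp.one_lt.le]
          ring
      rw [Finset.sum_congr rfl hterm, Finset.sum_sub_distrib, Finset.sum_ite_eq'
        (range (n + 1)) 0 (fun _ => c ^ (p ^ n))]
      rw [if_pos (Finset.mem_range.mpr (by omega))]
      ring
    rw [key]
    refine dvd_add ?_ ?_
    · have h1 : (p : ℤ) ∣ c ^ p - c := fermat_int p hp c
      have h2 := dvd_sub_pow_of_dvd_sub h1 n
      have h3 : (c ^ p) ^ p ^ n = c ^ p ^ (n + 1) := by
        rw [← pow_mul, pow_succ, mul_comm]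
      rw [h3] at h2
      exact_mod_cast h2
    · rw [pow_succ, mul_comm ((p:ℤ)^n) (p:ℤ)]
      exact mul_dvd_mul_left _ ih

private lemma nsumZ_prime_pow (p : ℕ) (hp : p.Prime) (n : ℕ) (c : ℤ) :
    ((p : ℤ) ^ n) ∣ nsumZ c (p ^ n) := by
  have hdiv : nsumZ c (p ^ n)
      = ∑ t ∈ range (n + 1), (Nat.totient (p ^ t) : ℤ) * c ^ (p ^ (n - t)) := by
    rw [nsumZ, Nat.divisors_prime_pow hp, Finset.sum_map]
    refine Finset.sum_congr rfl fun t ht => ?_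
    have htn : t ≤ n := by
      have := Finset.mem_range.mp ht; omega
    simp only [Function.Embedding.coeFn_mk]
    rw [Nat.pow_div htn hp.pos]
  rw [hdiv]
  exact nsum_prime_pow_aux p hp c n

/-- Reindexing of a sum over divisors of a coprime product. -/
private lemma sum_divisors_coprime_mul {M : Type*} [AddCommMonoid M] {a b : ℕ}
    (hab : Nat.Coprime a b) (ha : a ≠ 0) (hb : b ≠ 0) (f : ℕ → M) :
    ∑ q ∈ Nat.divisors (a * b), f q
      = ∑ x ∈ Nat.divisors a ×ˢ Nat.divisors b, f (x.1 * x.2) := by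
  refine Finset.sum_nbij' (fun q => (Nat.gcd q a, Nat.gcd q b)) (fun x => x.1 * x.2)
    ?_ ?_ ?_ ?_ ?_
  · intro q hq
    rw [Nat.mem_divisors] at hq
    rw [Finset.mem_product, Nat.mem_divisors, Nat.mem_divisors]
    exact ⟨⟨Nat.gcd_dvd_right _ _, ha⟩, ⟨Nat.gcd_dvd_right _ _, hb⟩⟩
  · intro x hx
    rw [Finset.mem_product, Nat.mem_divisors, Nat.mem_divisors] at hx
    rw [Nat.mem_divisors]
    exact ⟨mul_dvd_mul hx.1.1 hx.2.1, mul_ne_zero ha hb⟩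
  · intro q hq
    rw [Nat.mem_divisors] at hq
    exact (Nat.gcd_mul_gcd_eq_iff_dvd_mul_of_coprime hab).mpr hq.1
  · intro x hx
    rw [Finset.mem_product, Nat.mem_divisors, Nat.mem_divisors] at hx
    have h1 : Nat.gcd (x.1 * x.2) a = x.1 := by
      have hcop : Nat.Coprime x.2 a := (hab.symm.coprime_dvd_left hx.2.1)
      rw [Nat.Coprime.gcd_mul_right_cancel x.1 hcop, Nat.gcd_eq_left hx.1.1]
    have h2 : Nat.gcd (x.1 * x.2) b = x.2 := by
      have hcop : Nat.Coprime x.1 b := (hab.coprime_dvd_left hx.1.1)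
      rw [Nat.Coprime.gcd_mul_left_cancel x.2 hcop, Nat.gcd_eq_left hx.2.1]
    rw [Prod.ext_iff]
    exact ⟨h1, h2⟩
  · intro q hq
    rw [Nat.mem_divisors] at hq
    rw [(Nat.gcd_mul_gcd_eq_iff_dvd_mul_of_coprime hab).mpr hq.1]

private lemma nsumZ_mul_left {a b : ℕ} (hab : Nat.Coprime a b) (ha : a ≠ 0) (hb : b ≠ 0)
    (IH : ∀ c : ℤ, (a : ℤ) ∣ nsumZ c a) (c : ℤ) : (a : ℤ) ∣ nsumZ c (a * b) := by
  rw [nsumZ, sum_divisors_coprime_mul hab ha hb]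
  rw [Finset.sum_product_right]
  refine Finset.dvd_sum fun q2 hq2 => ?_
  rw [Nat.mem_divisors] at hq2
  have hsum : ∀ q1 ∈ Nat.divisors a,
      (Nat.totient (q1 * q2) : ℤ) * c ^ (a * b / (q1 * q2))
        = (Nat.totient q2 : ℤ) * ((Nat.totient q1 : ℤ) * (c ^ (b / q2)) ^ (a / q1)) := by
    intro q1 hq1
    rw [Nat.mem_divisors] at hq1
    have hcop : Nat.Coprime q1 q2 :=
      Nat.Coprime.coprime_dvd_right hq2.1 (hab.coprime_dvd_left hq1.1)
    have htot : Nat.totient (q1 * q2) = Nat.totient q1 * Nat.totient q2 :=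
      Nat.totient_mul hcop
    have hdiv : a * b / (q1 * q2) = (a / q1) * (b / q2) :=
      (Nat.div_mul_div_comm hq1.1 hq2.1).symm
    rw [htot, hdiv, pow_mul']
    push_cast
    ring
  rw [Finset.sum_congr rfl hsum, ← Finset.mul_sum]
  exact Dvd.dvd.mul_left (IH (c ^ (b / q2))) _

private lemma nsumZ_dvd (i : ℕ) : ∀ c : ℤ, (i : ℤ) ∣ nsumZ c i := by
  induction i using Nat.recOnPosPrimePosCoprime with
  | prime_pow p n hp hn =>
    intro c
    exact_mod_cast nsumZ_prime_pow p hp n c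
  | zero => intro c; simp [nsumZ]
  | one => intro c; simp [nsumZ]
  | coprime a b ha hb hab IHa IHb =>
    intro c
    have hva : (a : ℤ) ∣ nsumZ c (a * b) :=
      nsumZ_mul_left hab (by omega) (by omega) IHa c
    have hvb : (b : ℤ) ∣ nsumZ c (a * b) := by
      rw [mul_comm a b]
      exact nsumZ_mul_left hab.symm (by omega) (by omega) IHb c
    have hcop : IsCoprime (a : ℤ) (b : ℤ) := Int.isCoprime_iff_gcd_eq_one.mpr (by
      exact_mod_cast hab)
    exact_mod_cast hcop.mul_dvd hva hvb

lemma necklace_dvd (d i : ℕ) : i ∣ ∑ q ∈ Nat.divisors i, Nat.totient q * d ^ (i / q) := by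
  have h := nsumZ_dvd i (d : ℤ)
  rw [nsumZ] at h
  have : ((∑ q ∈ Nat.divisors i, Nat.totient q * d ^ (i / q) : ℕ) : ℤ)
      = ∑ q ∈ Nat.divisors i, (Nat.totient q : ℤ) * (d : ℤ) ^ (i / q) := by
    push_cast; rfl
  exact_mod_cast this ▸ h

lemma mul_necklaceCount (d i : ℕ) :
    i * necklaceCount d i = ∑ q ∈ Nat.divisors i, Nat.totient q * d ^ (i / q) :=
  Nat.mul_div_cancel' (necklace_dvd d i)

/-- The key arithmetic identity: `∑_{i ∣ m} i * a_i = ∑_{i ∣ m} i * d^(m/i)`. -/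
lemma key_arith (d m : ℕ) (hm : m ≠ 0) :
    ∑ i ∈ Nat.divisors m, i * necklaceCount d i
      = ∑ i ∈ Nat.divisors m, i * d ^ (m / i) := by
  have step1 : ∑ i ∈ Nat.divisors m, i * necklaceCount d i
      = ∑ i ∈ Nat.divisors m, ∑ q ∈ Nat.divisors i, Nat.totient q * d ^ (i / q) :=
    Finset.sum_congr rfl fun i _ => mul_necklaceCount d i
  have step2 : ∑ i ∈ Nat.divisors m, ∑ q ∈ Nat.divisors i, Nat.totient q * d ^ (i / q)
      = ∑ s ∈ Nat.divisors m, ∑ q ∈ Nat.divisors (m / s), Nat.totient q * d ^ s := by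
    rw [Finset.sum_sigma', Finset.sum_sigma']
    refine Finset.sum_nbij' (fun x => ⟨x.1 / x.2, x.2⟩) (fun y => ⟨y.1 * y.2, y.2⟩)
      ?_ ?_ ?_ ?_ ?_
    · rintro ⟨i, q⟩ hx
      simp only [Finset.mem_sigma, Nat.mem_divisors] at hx ⊢
      obtain ⟨⟨him, -⟩, hqi, hi0⟩ := hx
      have hq0 : q ≠ 0 := by rintro rfl; exact hi0 (zero_dvd_iff.mp hqi)
      refine ⟨⟨(Nat.div_dvd_of_dvd hqi).trans him, hm⟩, ?_, ?_⟩
      · -- q ∣ m / (i / q)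
        obtain ⟨u, rfl⟩ := hqi
        obtain ⟨t, rfl⟩ := him
        rw [Nat.mul_div_cancel_left u (Nat.pos_of_ne_zero hq0)]
        have hu0 : u ≠ 0 := by rintro rfl; simp at hi0
        have : q * u * t / u = q * t := by
          rw [mul_comm q u, mul_assoc, Nat.mul_div_cancel_left _ (Nat.pos_of_ne_zero hu0)]
        rw [this]
        exact Dvd.intro t rfl
      · -- m / (i / q) ≠ 0
        have hiq : 0 < i / q :=
          Nat.div_pos (Nat.le_of_dvd (Nat.pos_of_ne_zero hi0) hqi) (Nat.pos_of_ne_zero hq0)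
        have h1 : i / q ∣ m := (Nat.div_dvd_of_dvd hqi).trans him
        exact (Nat.div_pos (Nat.le_of_dvd (Nat.pos_of_ne_zero hm) h1) hiq).ne'
    · rintro ⟨s, q⟩ hy
      simp only [Finset.mem_sigma, Nat.mem_divisors] at hy ⊢
      obtain ⟨⟨hsm, -⟩, hqms, hms0⟩ := hy
      have hq0 : q ≠ 0 := by rintro rfl; exact hms0 (zero_dvd_iff.mp hqms)
      have hs0 : s ≠ 0 := by rintro rfl; exact hm (zero_dvd_iff.mp hsm)
      have hqs : s * q ∣ m := (Nat.dvd_div_iff_mul_dvd hsm).mp hqms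
      exact ⟨⟨hqs, hm⟩, Dvd.intro_left s rfl, mul_ne_zero hs0 hq0⟩
    · rintro ⟨i, q⟩ hx
      simp only [Finset.mem_sigma, Nat.mem_divisors] at hx
      obtain ⟨⟨him, -⟩, hqi, hi0⟩ := hx
      simp [Nat.div_mul_cancel hqi]
    · rintro ⟨s, q⟩ hy
      simp only [Finset.mem_sigma, Nat.mem_divisors] at hy
      obtain ⟨⟨hsm, -⟩, hqms, hms0⟩ := hy
      have hq0 : q ≠ 0 := by rintro rfl; exact hms0 (zero_dvd_iff.mp hqms)
      simp [Nat.mul_div_cancel _ (Nat.pos_of_ne_zero hq0)]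
    · rintro ⟨i, q⟩ hx
      rfl
  have step3 : ∑ s ∈ Nat.divisors m, ∑ q ∈ Nat.divisors (m / s), Nat.totient q * d ^ s
      = ∑ s ∈ Nat.divisors m, (m / s) * d ^ s := by
    refine Finset.sum_congr rfl fun s _ => ?_
    rw [← Finset.sum_mul, Nat.sum_totient]
  have step4 : ∑ s ∈ Nat.divisors m, (m / s) * d ^ s
      = ∑ i ∈ Nat.divisors m, i * d ^ (m / i) := by
    have := Nat.sum_div_divisors m (fun i => i * d ^ (m / i))
    rw [← this]
    refine Finset.sum_congr rfl fun s hs => ?_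
    rw [Nat.mem_divisors] at hs
    rw [Nat.div_div_self hs.1 hm]
  rw [step1, step2, step3, step4]

/-! ### Power series part -/

/-- The geometric series `(1 - c X^i)⁻¹ = ∑ c^k X^(i k)`. -/
noncomputable def geomPS (c : ℚ) (i : ℕ) : ℚ⟦X⟧ :=
  PowerSeries.mk fun n => if i ∣ n then c ^ (n / i) else 0

lemma cc_one_sub_eq (c : ℚ) (i : ℕ) (hi : 0 < i) :
    constantCoeff (1 - C c * X ^ i) = 1 := by
  rw [map_sub, map_one, map_mul, map_pow, constantCoeff_C, constantCoeff_X,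
    zero_pow hi.ne', mul_zero, sub_zero]

lemma one_sub_mul_geomPS (c : ℚ) (i : ℕ) (hi : 0 < i) :
    (1 - C c * X ^ i) * geomPS c i = 1 := by
  have hre : (1 - C c * X ^ i) * geomPS c i
      = geomPS c i - C c * (geomPS c i * X ^ i) := by ring
  rw [hre]
  ext n
  rw [map_sub, coeff_C_mul, PowerSeries.coeff_mul_X_pow', coeff_one]
  simp only [geomPS, coeff_mk]
  rcases Nat.eq_zero_or_pos n with rfl | hn
  · rw [if_pos (dvd_zero i), if_neg (by omega), if_pos rfl]
    simp
  · rw [if_neg (by omega : ¬ n = 0)]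
    by_cases hdvd : i ∣ n
    · have h1 : i ≤ n := Nat.le_of_dvd hn hdvd
      have h2 : i ∣ n - i := Nat.dvd_sub hdvd dvd_rfl
      rw [if_pos hdvd, if_pos h1, if_pos h2]
      have h3 : n / i = (n - i) / i + 1 := Nat.div_eq_sub_div hi h1
      rw [h3, pow_succ]
      ring
    · rw [if_neg hdvd]
      by_cases h1 : i ≤ n
      · have h2 : ¬ i ∣ n - i := by
          intro h
          have : i ∣ (n - i) + i := Dvd.dvd.add h dvd_rfl
          rw [Nat.sub_add_cancel h1] at this
          exact hdvd this
        rw [if_pos h1, if_neg h2]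
        ring
      · rw [if_neg h1]
        ring

lemma inv_one_sub_eq (c : ℚ) (i : ℕ) (hi : 0 < i) :
    (1 - C c * X ^ i)⁻¹ = geomPS c i := by
  refine (PowerSeries.inv_eq_iff_mul_eq_one ?_).mpr ?_
  · rw [cc_one_sub_eq c i hi]; norm_num
  · rw [mul_comm]
    exact one_sub_mul_geomPS c i hi

lemma deriv_one_sub (c : ℚ) (i : ℕ) (hi : 0 < i) :
    d⁄dX ℚ (1 - C c * X ^ i) = C (-(c * i)) * X ^ (i - 1) := by
  ext n
  rw [coeff_derivative, map_sub, coeff_one, coeff_C_mul, coeff_C_mul, coeff_X_pow, coeff_X_pow]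
  rw [if_neg (by omega : ¬ n + 1 = 0)]
  by_cases h : n + 1 = i
  · rw [if_pos h, if_pos (by omega : n = i - 1)]
    have h2 : (i : ℚ) = (n : ℚ) + 1 := by exact_mod_cast congrArg (Nat.cast (R := ℚ)) h.symm
    rw [h2]
    ring
  · rw [if_neg h, if_neg (by omega : ¬ n = i - 1)]
    ring

lemma coeff_logderiv (c : ℚ) (i : ℕ) (hi : 0 < i) (m : ℕ) :
    coeff m (d⁄dX ℚ (1 - C c * X ^ i) * (1 - C c * X ^ i)⁻¹)
      = if i ∣ (m + 1) then -((i : ℚ) * c ^ ((m + 1) / i)) else 0 := by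
  rw [deriv_one_sub c i hi, inv_one_sub_eq c i hi]
  have hre : C (-(c * i)) * X ^ (i - 1) * geomPS c i
      = C (-(c * i)) * (geomPS c i * X ^ (i - 1)) := by ring
  rw [hre, coeff_C_mul, PowerSeries.coeff_mul_X_pow']
  by_cases hdvd : i ∣ m + 1
  · rw [if_pos hdvd]
    obtain ⟨k, hk⟩ := hdvd
    rcases k with _ | k
    · omega
    rw [Nat.mul_succ] at hk
    have h1 : i - 1 ≤ m := by omega
    rw [if_pos h1]
    simp only [geomPS, coeff_mk]
    have h2 : m - (i - 1) = i * k := by omega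
    rw [h2, if_pos (dvd_mul_right i k), Nat.mul_div_cancel_left k hi]
    have h3 : (m + 1) / i = k + 1 := by
      rw [show m + 1 = i * (k + 1) by rw [Nat.mul_succ]; omega, Nat.mul_div_cancel_left _ hi]
    rw [h3, pow_succ]
    ring
  · rw [if_neg hdvd]
    by_cases h1 : i - 1 ≤ m
    · have h2 : ¬ i ∣ m - (i - 1) := by
        intro h
        have h3 : m + 1 = (m - (i - 1)) + i := by omega
        exact hdvd (h3 ▸ Dvd.dvd.add h dvd_rfl)
      simp only [geomPS, coeff_mk]
      rw [if_pos h1, if_neg h2, mul_zero]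
    · rw [if_neg h1, mul_zero]

lemma logderiv_inv (w : ℚ⟦X⟧) (hw : constantCoeff w ≠ 0) :
    d⁄dX ℚ w⁻¹ * (w⁻¹)⁻¹ = -(d⁄dX ℚ w * w⁻¹) := by
  have hcc : constantCoeff w⁻¹ ≠ 0 := by
    rw [PowerSeries.constantCoeff_inv]
    exact inv_ne_zero hw
  have hiv : (w⁻¹)⁻¹ = w :=
    (PowerSeries.inv_eq_iff_mul_eq_one hcc).mpr (PowerSeries.mul_inv_cancel w hw)
  rw [PowerSeries.derivative_inv', hiv]
  have h2 : w⁻¹ * w = 1 := PowerSeries.inv_mul_cancel w hw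
  calc -w⁻¹ ^ 2 * d⁄dX ℚ w * w = -(d⁄dX ℚ w * w⁻¹) * (w⁻¹ * w) := by ring
  _ = -(d⁄dX ℚ w * w⁻¹) := by rw [h2, mul_one]

lemma logderiv_pow_inv (w : ℚ⟦X⟧) (hw : constantCoeff w ≠ 0) (n : ℕ) :
    d⁄dX ℚ (w⁻¹ ^ n) * (w⁻¹ ^ n)⁻¹ = -(C (n : ℚ) * (d⁄dX ℚ w * w⁻¹)) := by
  rcases n with _ | k
  · simp
  have hcc : constantCoeff w⁻¹ ≠ 0 := by
    rw [PowerSeries.constantCoeff_inv]; exact inv_ne_zero hw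
  have hccp : constantCoeff (w⁻¹ ^ (k + 1)) ≠ 0 := by
    rw [map_pow]
    exact pow_ne_zero _ hcc
  have hivp : (w⁻¹ ^ (k + 1))⁻¹ = w ^ (k + 1) := by
    refine (PowerSeries.inv_eq_iff_mul_eq_one hccp).mpr ?_
    rw [← mul_pow, PowerSeries.mul_inv_cancel w hw, one_pow]
  rw [hivp, Derivation.leibniz_pow, PowerSeries.derivative_inv']
  rw [smul_eq_mul, nsmul_eq_mul]
  have h2 : w⁻¹ * w = 1 := PowerSeries.inv_mul_cancel w hw
  have hkey : (↑(k + 1) : ℚ⟦X⟧) * (w⁻¹ ^ (k + 1 - 1) * (-w⁻¹ ^ 2 * d⁄dX ℚ w)) * w ^ (k + 1)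
      = -((↑(k + 1) : ℚ⟦X⟧) * (d⁄dX ℚ w * (w⁻¹ * (w⁻¹ * w) ^ (k + 1)))) := by
    rw [Nat.add_sub_cancel]
    ring
  rw [hkey, h2, one_pow, mul_one, map_natCast (C (R := ℚ)) (k + 1)]

lemma deriv_prod (s : Finset ℕ) (f : ℕ → ℚ⟦X⟧)
    (hf : ∀ i ∈ s, constantCoeff (f i) ≠ 0) :
    d⁄dX ℚ (∏ i ∈ s, f i) = (∏ i ∈ s, f i) * ∑ i ∈ s, d⁄dX ℚ (f i) * (f i)⁻¹ := by
  classical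
  induction s using Finset.induction_on with
  | empty => simp
  | insert _ _ ha ih =>
    rename_i a s
    rw [Finset.prod_insert ha, Finset.sum_insert ha]
    have hD : d⁄dX ℚ (f a * ∏ i ∈ s, f i)
        = f a * d⁄dX ℚ (∏ i ∈ s, f i) + (∏ i ∈ s, f i) * d⁄dX ℚ (f a) := by
      rw [Derivation.leibniz, smul_eq_mul, smul_eq_mul]
    rw [hD, ih (fun i hi => hf i (Finset.mem_insert_of_mem hi))]
    have hcancel : f a * (f a)⁻¹ = 1 :=
      PowerSeries.mul_inv_cancel _ (hf a (Finset.mem_insert_self a s))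
    have hre : (f a * ∏ i ∈ s, f i)
          * (d⁄dX ℚ (f a) * (f a)⁻¹ + ∑ i ∈ s, d⁄dX ℚ (f i) * (f i)⁻¹)
        = (∏ i ∈ s, f i) * d⁄dX ℚ (f a) * (f a * (f a)⁻¹)
          + f a * ((∏ i ∈ s, f i) * ∑ i ∈ s, d⁄dX ℚ (f i) * (f i)⁻¹) := by
      ring
    rw [hre, hcancel, mul_one]
    ring

/-- The plethystic/necklace identity: as formal power series,
`∏_{i≥1} 1/(1 − d x^i) = ∏_{i≥1} 1/(1 − x^i)^(a_i)` with
`a_i = (1/i) ∑_{q ∣ i} φ(q) d^(i/q)`, stated coefficient-wise (factors with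
`i > K` do not affect the coefficient of `x^K`). -/
theorem stmt_14 (d : ℕ) (hd : 1 ≤ d) (K : ℕ) :
    PowerSeries.coeff (R := ℚ) K
        (∏ i ∈ Finset.Icc 1 K, (1 - (d : ℚ⟦X⟧) * (PowerSeries.X : ℚ⟦X⟧) ^ i)⁻¹) =
      PowerSeries.coeff (R := ℚ) K
        (∏ i ∈ Finset.Icc 1 K,
          ((1 - (PowerSeries.X : ℚ⟦X⟧) ^ i)⁻¹) ^ (necklaceCount d i)) := by
  classical
  have hdcast : ((d : ℚ⟦X⟧)) = C (d : ℚ) := (map_natCast (C (R := ℚ)) d).symm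
  have hxcast : ∀ i : ℕ, (1 - (X : ℚ⟦X⟧) ^ i) = 1 - C (1 : ℚ) * X ^ i := by
    intro i; rw [map_one, one_mul]
  simp only [hdcast, hxcast]
  set a : ℕ → ℕ := necklaceCount d with ha
  set u : ℕ → ℚ⟦X⟧ := fun i => 1 - C (d : ℚ) * X ^ i with hu
  set v : ℕ → ℚ⟦X⟧ := fun i => 1 - C (1 : ℚ) * X ^ i with hv
  set F : ℚ⟦X⟧ := ∏ i ∈ Finset.Icc 1 K, (u i)⁻¹ with hF
  set G : ℚ⟦X⟧ := ∏ i ∈ Finset.Icc 1 K, ((v i)⁻¹) ^ a i with hG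
  -- positivity of indices
  have hpos : ∀ i ∈ Finset.Icc 1 K, 0 < i := fun i hi => (Finset.mem_Icc.mp hi).1
  -- constant coefficients
  have hccu : ∀ i ∈ Finset.Icc 1 K, constantCoeff (u i) = 1 :=
    fun i hi => cc_one_sub_eq _ i (hpos i hi)
  have hccv : ∀ i ∈ Finset.Icc 1 K, constantCoeff (v i) = 1 :=
    fun i hi => cc_one_sub_eq _ i (hpos i hi)
  have hccui : ∀ i ∈ Finset.Icc 1 K, constantCoeff ((u i)⁻¹) = 1 := by
    intro i hi
    rw [PowerSeries.constantCoeff_inv, hccu i hi, inv_one]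
  have hccvp : ∀ i ∈ Finset.Icc 1 K, constantCoeff (((v i)⁻¹) ^ a i) = 1 := by
    intro i hi
    rw [map_pow, PowerSeries.constantCoeff_inv, hccv i hi, inv_one, one_pow]
  have hccF : constantCoeff F = 1 := by
    rw [hF, map_prod]
    exact Finset.prod_eq_one hccui
  have hccG : constantCoeff G = 1 := by
    rw [hG, map_prod]
    exact Finset.prod_eq_one hccvp
  have hGinv : G⁻¹ * G = 1 := PowerSeries.inv_mul_cancel G (by rw [hccG]; norm_num)
  -- derivatives of the two products
  have hDF : d⁄dX ℚ F = F * ∑ i ∈ Finset.Icc 1 K, -(d⁄dX ℚ (u i) * (u i)⁻¹) := by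
    rw [hF, deriv_prod _ _ (fun i hi => by rw [hccui i hi]; norm_num), ← hF]
    congr 1
    refine Finset.sum_congr rfl fun i hi => ?_
    exact logderiv_inv (u i) (by rw [hccu i hi]; norm_num)
  have hDG : d⁄dX ℚ G = G * ∑ i ∈ Finset.Icc 1 K,
      -(C (a i : ℚ) * (d⁄dX ℚ (v i) * (v i)⁻¹)) := by
    rw [hG, deriv_prod _ _ (fun i hi => by rw [hccvp i hi]; norm_num), ← hG]
    congr 1
    refine Finset.sum_congr rfl fun i hi => ?_
    exact logderiv_pow_inv (v i) (by rw [hccv i hi]; norm_num) (a i)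
  set SF : ℚ⟦X⟧ := ∑ i ∈ Finset.Icc 1 K, -(d⁄dX ℚ (u i) * (u i)⁻¹) with hSF
  set SG : ℚ⟦X⟧ := ∑ i ∈ Finset.Icc 1 K,
    -(C (a i : ℚ) * (d⁄dX ℚ (v i) * (v i)⁻¹)) with hSG
  -- the difference of log-derivatives vanishes up to order K
  have hvanish : ∀ m, m < K → coeff m (SF - SG) = 0 := by
    intro m hm
    rw [map_sub, hSF, hSG, map_sum, map_sum]
    have hterm1 : ∀ i ∈ Finset.Icc 1 K,
        coeff m (-(d⁄dX ℚ (u i) * (u i)⁻¹))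
          = if i ∣ m + 1 then (i : ℚ) * (d : ℚ) ^ ((m + 1) / i) else 0 := by
      intro i hi
      rw [map_neg, hu]
      rw [coeff_logderiv (d : ℚ) i (hpos i hi) m]
      split_ifs <;> ring
    have hterm2 : ∀ i ∈ Finset.Icc 1 K,
        coeff m (-(C (a i : ℚ) * (d⁄dX ℚ (v i) * (v i)⁻¹)))
          = if i ∣ m + 1 then (a i : ℚ) * (i : ℚ) else 0 := by
      intro i hi
      rw [map_neg, coeff_C_mul, hv, coeff_logderiv 1 i (hpos i hi) m]
      split_ifs <;> [skip; ring]
      rw [one_pow]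
      ring
    rw [Finset.sum_congr rfl hterm1, Finset.sum_congr rfl hterm2]
    rw [← Finset.sum_filter, ← Finset.sum_filter]
    have hfe : (Finset.Icc 1 K).filter (fun i => i ∣ m + 1) = (m + 1).divisors := by
      ext i
      simp only [Finset.mem_filter, Finset.mem_Icc, Nat.mem_divisors]
      constructor
      · rintro ⟨-, h⟩; exact ⟨h, by omega⟩
      · rintro ⟨h, -⟩
        have h1 : 0 < i := Nat.pos_of_dvd_of_pos h (by omega)
        have h2 : i ≤ m + 1 := Nat.le_of_dvd (by omega) h
        exact ⟨⟨h1, by omega⟩, h⟩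
    rw [hfe]
    have hk := key_arith d (m + 1) (by omega)
    have h1 : ∑ i ∈ (m + 1).divisors, (i : ℚ) * (d : ℚ) ^ ((m + 1) / i)
        = ((∑ i ∈ (m + 1).divisors, i * d ^ ((m + 1) / i) : ℕ) : ℚ) := by
      push_cast; rfl
    have h2 : ∑ i ∈ (m + 1).divisors, (a i : ℚ) * (i : ℚ)
        = ((∑ i ∈ (m + 1).divisors, i * a i : ℕ) : ℚ) := by
      push_cast
      exact Finset.sum_congr rfl fun i _ => by ring
    rw [h1, h2, ha, ← hk, sub_self]
  -- the quotient h = F * G⁻¹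
  set h : ℚ⟦X⟧ := F * G⁻¹ with hh
  have hDh : d⁄dX ℚ h = h * (SF - SG) := by
    rw [hh, Derivation.leibniz, smul_eq_mul, smul_eq_mul,
      PowerSeries.derivative_inv', hDF, hDG]
    have : F * (-G⁻¹ ^ 2 * (G * SG)) + G⁻¹ * (F * SF)
        = F * G⁻¹ * SF - F * G⁻¹ * ((G⁻¹ * G) * SG) := by ring
    rw [this, hGinv, one_mul]
    ring
  have hDh0 : ∀ m, m < K → coeff m (d⁄dX ℚ h) = 0 := by
    intro m hm
    rw [hDh, PowerSeries.coeff_mul]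
    refine Finset.sum_eq_zero fun x hx => ?_
    rw [Finset.HasAntidiagonal.mem_antidiagonal] at hx
    rw [hvanish x.2 (by omega), mul_zero]
  have hcoeffh : ∀ n, 1 ≤ n → n ≤ K → coeff n h = 0 := by
    intro n h1 h2
    have h3 := hDh0 (n - 1) (by omega)
    rw [coeff_derivative] at h3
    have h4 : n - 1 + 1 = n := by omega
    rw [h4] at h3
    have h5 : ((n : ℚ)) ≠ 0 := by positivity
    have h6 : (coeff n) h * ((n - 1 : ℕ) + 1 : ℚ) = 0 := h3
    have h7 : ((n - 1 : ℕ) + 1 : ℚ) ≠ 0 := by positivity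
    exact (mul_eq_zero.mp h6).resolve_right h7
  have hcoeffh0 : coeff 0 h = 1 := by
    rw [PowerSeries.coeff_zero_eq_constantCoeff, hh, map_mul, hccF,
      PowerSeries.constantCoeff_inv, hccG, inv_one, one_mul]
  have hFhG : F = h * G := by
    rw [hh, mul_assoc, hGinv, mul_one]
  rw [hFhG, PowerSeries.coeff_mul]
  rw [Finset.sum_eq_single (0, K)]
  · rw [hcoeffh0, one_mul]
  · rintro ⟨p, q⟩ hpq hne
    rw [Finset.HasAntidiagonal.mem_antidiagonal] at hpq
    have hp : 1 ≤ p := by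
      rcases Nat.eq_zero_or_pos p with rfl | h
      · exfalso; exact hne (by simp at hpq ⊢; omega)
      · exact h
    rw [hcoeffh p hp (by omega), zero_mul]
  · intro hnot
    exact absurd (Finset.HasAntidiagonal.mem_antidiagonal.mpr (by omega)) hnot
end

section
/- For n ≥ 1 and d ≥ 2, the residue coefficient at the positive real pole x_{n,0} = d^{-1/n} of Z_d(x) = ∏_{i≥1} 1/(1 − d x^i) factorizes as c_{n,0} = (1/n) · [∏_{k=1}^{n-1} (1 − d · d^{-k/n})]^{-1} · [∏_{k≥1} (1 − d^{-k/n})]^{-1}, and in particular c_{1,0} = ∏_{k≥1} (1 − 2^{-k})^{-1} when d = 2. -/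
open Filter Topology Real

private lemma abs_log_one_sub_le {u c : ℝ} (h : |u| ≤ c) (hc : c < 1) :
    |Real.log (1 - u)| ≤ c / (1 - c) := by
  have hc0 : 0 ≤ c := (abs_nonneg u).trans h
  have h1c : 0 < 1 - c := by linarith
  obtain ⟨hu1, hu2⟩ := abs_le.1 h
  have hy : 0 < 1 - u := by linarith
  have key : -Real.log (1 - c) ≤ c / (1 - c) := by
    have h1 := Real.log_le_sub_one_of_pos (inv_pos.2 h1c)
    rw [Real.log_inv] at h1
    have h2 : (1 - c)⁻¹ - 1 = c / (1 - c) := by field_simp; ring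
    linarith
  rw [abs_le]
  constructor
  · have h1 : Real.log (1 - c) ≤ Real.log (1 - u) := Real.log_le_log h1c (by linarith)
    linarith
  · have h1 := Real.log_le_sub_one_of_pos hy
    have h2 : c ≤ c / (1 - c) := by
      rw [le_div_iff₀ h1c]; nlinarith
    linarith

private lemma tprod_inv_eq {w : ℕ → ℝ} (hpos : ∀ k, 0 < w k)
    (hsum : Summable fun k => Real.log (w k)) :
    (∏' k, (w k)⁻¹) = (∏' k, w k)⁻¹ := by
  have h1 : HasProd w (Real.exp (∑' k, Real.log (w k))) := by
    have h := hsum.hasSum.rexp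
    rwa [show rexp ∘ (fun k => Real.log (w k)) = w from
      funext fun k => Real.exp_log (hpos k)] at h
  have h2 : HasProd (fun k => (w k)⁻¹) (Real.exp (-∑' k, Real.log (w k))) := by
    have h := hsum.neg.hasSum.rexp
    rw [show rexp ∘ (fun k => -Real.log (w k)) = fun k => (w k)⁻¹ from
      funext fun k => by
        simp only [Function.comp_apply, Real.exp_neg, Real.exp_log (hpos k)]] at h
    rwa [tsum_neg] at h
  rw [h1.tprod_eq, h2.tprod_eq, Real.exp_neg]

private lemma residue_main (d n : ℕ) (hd : 2 ≤ d) (hn : 1 ≤ n) :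
    Tendsto
      (fun x : ℝ =>
        (∏' i : ℕ, (1 - (d : ℝ) * x ^ (i + 1))⁻¹) * (1 - (d : ℝ) ^ ((1 : ℝ) / n) * x))
      (𝓝[≠] ((d : ℝ) ^ (-(1 : ℝ) / n)))
      (𝓝 ((1 / (n : ℝ)) *
        (∏ k ∈ Finset.Icc 1 (n - 1), (1 - (d : ℝ) * (d : ℝ) ^ (-(k : ℝ) / n)))⁻¹ *
        (∏' k : ℕ, (1 - (d : ℝ) ^ (-((k : ℝ) + 1) / n)))⁻¹)) := by
  have hd2 : (2 : ℝ) ≤ (d : ℝ) := by exact_mod_cast hd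
  have hD1 : (1 : ℝ) < (d : ℝ) := by linarith
  have hD0 : (0 : ℝ) < (d : ℝ) := by linarith
  have hn0 : (0 : ℝ) < (n : ℝ) := by exact_mod_cast hn
  set x₀ : ℝ := (d : ℝ) ^ (-(1 : ℝ) / (n : ℝ)) with hx₀def
  have hx₀pos : 0 < x₀ := Real.rpow_pos_of_pos hD0 _
  have hexp_neg : -(1 : ℝ) / (n : ℝ) < 0 := div_neg_of_neg_of_pos (by norm_num) hn0
  have hx₀lt1 : x₀ < 1 := Real.rpow_lt_one_of_one_lt_of_neg hD1 hexp_neg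
  set r : ℝ := (d : ℝ) ^ (-(1 : ℝ) / ((n : ℝ) + 1)) with hrdef
  have hn10 : (0 : ℝ) < (n : ℝ) + 1 := by linarith
  have hx₀r : x₀ < r := by
    rw [hx₀def, hrdef, Real.rpow_lt_rpow_left_iff hD1, div_lt_div_iff₀ hn0 hn10]
    nlinarith
  have hr1 : r < 1 :=
    Real.rpow_lt_one_of_one_lt_of_neg hD1 (div_neg_of_neg_of_pos (by norm_num) hn10)
  set r' : ℝ := (x₀ + r) / 2 with hr'def
  have hr'0 : 0 < r' := by rw [hr'def]; positivity
  have hx₀r' : x₀ < r' := by rw [hr'def]; linarith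
  have hr'r : r' < r := by rw [hr'def]; linarith
  have hr'1 : r' < 1 := by linarith
  have hrpow : r ^ (n + 1) = (d : ℝ)⁻¹ := by
    rw [hrdef, ← Real.rpow_natCast ((d : ℝ) ^ (-(1 : ℝ) / ((n : ℝ) + 1))) (n + 1),
      ← Real.rpow_mul hD0.le]
    have he : -(1 : ℝ) / ((n : ℝ) + 1) * ((n + 1 : ℕ) : ℝ) = -1 := by
      push_cast; field_simp
    rw [he, Real.rpow_neg_one]
  set q : ℝ := (d : ℝ) * r' ^ (n + 1) with hqdef
  have hq0 : 0 < q := by rw [hqdef]; positivity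
  have hq1 : q < 1 := by
    have h1 : r' ^ (n + 1) < r ^ (n + 1) := pow_lt_pow_left₀ hr'r hr'0.le (by omega)
    have h2 : q < (d : ℝ) * r ^ (n + 1) := by
      rw [hqdef]; exact mul_lt_mul_of_pos_left h1 hD0
    rw [hrpow] at h2
    rwa [mul_inv_cancel₀ hD0.ne'] at h2
  set S : Set ℝ := Set.Ioo (-r') r' with hSdef
  have hx₀mem : x₀ ∈ S := ⟨by linarith, hx₀r'⟩
  have hmem : S ∈ 𝓝 x₀ := Ioo_mem_nhds (by linarith) hx₀r'
  -- tail bounds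
  have key_bound : ∀ x ∈ S, ∀ k : ℕ, |(d : ℝ) * x ^ (k + n + 1)| ≤ q * r' ^ k := by
    intro x hx k
    have hxr : |x| ≤ r' := le_of_lt (abs_lt.2 ⟨hx.1, hx.2⟩)
    rw [abs_mul, abs_pow, abs_of_pos hD0]
    have h1 : |x| ^ (k + n + 1) ≤ r' ^ (k + n + 1) :=
      pow_le_pow_left₀ (abs_nonneg x) hxr _
    have h2 : (d : ℝ) * |x| ^ (k + n + 1) ≤ (d : ℝ) * r' ^ (k + n + 1) :=
      mul_le_mul_of_nonneg_left h1 hD0.le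
    have h3 : (d : ℝ) * r' ^ (k + n + 1) = q * r' ^ k := by
      rw [hqdef, show k + n + 1 = (n + 1) + k by omega, pow_add]; ring
    linarith
  have hqr'k : ∀ k : ℕ, q * r' ^ k ≤ q := by
    intro k
    have := pow_le_one₀ hr'0.le hr'1.le (n := k)
    nlinarith
  have hqr'k1 : ∀ k : ℕ, q * r' ^ k < 1 := fun k => lt_of_le_of_lt (hqr'k k) hq1
  have hfac_pos : ∀ x ∈ S, ∀ k : ℕ, 0 < 1 - (d : ℝ) * x ^ (k + n + 1) := by
    intro x hx k
    have h1 := (abs_le.1 (key_bound x hx k)).2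
    have h2 := hqr'k1 k
    linarith
  -- summability of logs
  have hM : Summable (fun k : ℕ => q / (1 - q) * r' ^ k) :=
    (summable_geometric_of_lt_one hr'0.le hr'1).mul_left _
  have hbound : ∀ (k : ℕ), ∀ x ∈ S,
      ‖Real.log ((1 - (d : ℝ) * x ^ (k + n + 1))⁻¹)‖ ≤ q / (1 - q) * r' ^ k := by
    intro k x hx
    rw [Real.log_inv, Real.norm_eq_abs, abs_neg]
    have h1 := abs_log_one_sub_le (key_bound x hx k) (hqr'k1 k)
    have hc0 : 0 ≤ q * r' ^ k := by positivity
    have h1q : 0 < 1 - q := by linarith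
    have h2 : 1 - q ≤ 1 - q * r' ^ k := by have := hqr'k k; linarith
    have h3 : q * r' ^ k / (1 - q * r' ^ k) ≤ q * r' ^ k / (1 - q) :=
      div_le_div_of_nonneg_left hc0 h1q h2
    have h4 : q * r' ^ k / (1 - q) = q / (1 - q) * r' ^ k := by ring
    linarith
  have hlog_sum : ∀ x ∈ S,
      Summable (fun k : ℕ => Real.log ((1 - (d : ℝ) * x ^ (k + n + 1))⁻¹)) := by
    intro x hx
    exact Summable.of_norm_bounded hM (fun k => hbound k x hx)
  -- hasprod for the tail
  have hT : ∀ x ∈ S, HasProd (fun k : ℕ => (1 - (d : ℝ) * x ^ (k + n + 1))⁻¹)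
      (Real.exp (∑' k : ℕ, Real.log ((1 - (d : ℝ) * x ^ (k + n + 1))⁻¹))) := by
    intro x hx
    have h := (hlog_sum x hx).hasSum.rexp
    rwa [show rexp ∘ (fun k : ℕ => Real.log ((1 - (d : ℝ) * x ^ (k + n + 1))⁻¹)) =
        fun k : ℕ => (1 - (d : ℝ) * x ^ (k + n + 1))⁻¹ from
      funext fun k => Real.exp_log (inv_pos.2 (hfac_pos x hx k))] at h
  have hT' : ∀ x ∈ S, HasProd (fun k : ℕ => (1 - (d : ℝ) * x ^ (k + n + 1))⁻¹)
      (∏' k : ℕ, (1 - (d : ℝ) * x ^ (k + n + 1))⁻¹) :=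
    fun x hx => (hT x hx).multipliable.hasProd
  -- continuity of the tail product
  have hLcont : ContinuousOn
      (fun x : ℝ => ∑' k : ℕ, Real.log ((1 - (d : ℝ) * x ^ (k + n + 1))⁻¹)) S := by
    apply continuousOn_tsum (u := fun k : ℕ => q / (1 - q) * r' ^ k) ?_ hM
      (fun k x hx => hbound k x hx)
    intro k
    have hbase : ContinuousOn (fun x : ℝ => 1 - (d : ℝ) * x ^ (k + n + 1)) S :=
      (continuous_const.sub (continuous_const.mul (continuous_pow _))).continuousOn
    exact ((hbase.inv₀ (fun x hx => (hfac_pos x hx k).ne')).log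
      (fun x hx => (inv_pos.2 (hfac_pos x hx k)).ne'))
  have hT_tendsto : Tendsto (fun x : ℝ => ∏' k : ℕ, (1 - (d : ℝ) * x ^ (k + n + 1))⁻¹)
      (𝓝 x₀) (𝓝 (∏' k : ℕ, (1 - (d : ℝ) * x₀ ^ (k + n + 1))⁻¹)) := by
    have hCA : ContinuousAt
        (fun x : ℝ => ∑' k : ℕ, Real.log ((1 - (d : ℝ) * x ^ (k + n + 1))⁻¹)) x₀ :=
      hLcont.continuousAt hmem
    have hCE : ContinuousAt (fun x : ℝ =>
        Real.exp (∑' k : ℕ, Real.log ((1 - (d : ℝ) * x ^ (k + n + 1))⁻¹))) x₀ :=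
      Real.continuous_exp.continuousAt.comp hCA
    have hev : (fun x : ℝ =>
        Real.exp (∑' k : ℕ, Real.log ((1 - (d : ℝ) * x ^ (k + n + 1))⁻¹))) =ᶠ[𝓝 x₀]
        (fun x : ℝ => ∏' k : ℕ, (1 - (d : ℝ) * x ^ (k + n + 1))⁻¹) := by
      filter_upwards [hmem] with x hx
      exact ((hT x hx).tprod_eq).symm
    have h1 := hCE.tendsto.congr' hev
    rwa [← (hT x₀ hx₀mem).tprod_eq] at h1
  -- key power identity
  have hx₀pow : ∀ m : ℕ, x₀ ^ m = (d : ℝ) ^ (-(m : ℝ) / (n : ℝ)) := by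
    intro m
    rw [hx₀def, ← Real.rpow_natCast ((d : ℝ) ^ (-(1 : ℝ) / (n : ℝ))) m,
      ← Real.rpow_mul hD0.le]
    congr 1; ring
  have hdx₀ : ∀ m : ℕ, (d : ℝ) * x₀ ^ m = (d : ℝ) ^ (1 - (m : ℝ) / (n : ℝ)) := by
    intro m
    rw [hx₀pow m]
    nth_rewrite 1 [← Real.rpow_one (d : ℝ)]
    rw [← Real.rpow_add hD0]
    congr 1; ring
  -- the value t₀ = 1
  have ht₀ : (d : ℝ) ^ ((1 : ℝ) / (n : ℝ)) * x₀ = 1 := by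
    rw [hx₀def, ← Real.rpow_add hD0]
    have : (1 : ℝ) / (n : ℝ) + -(1 : ℝ) / (n : ℝ) = 0 := by ring
    rw [this, Real.rpow_zero]
  -- eventual equality with the factorized form
  have hFG : ∀ᶠ x in 𝓝[≠] x₀,
      (∏' i : ℕ, (1 - (d : ℝ) * x ^ (i + 1))⁻¹) * (1 - (d : ℝ) ^ ((1 : ℝ) / (n : ℝ)) * x) =
      (∏ i ∈ Finset.range (n - 1), (1 - (d : ℝ) * x ^ (i + 1))⁻¹) *
        (∑ j ∈ Finset.range n, ((d : ℝ) ^ ((1 : ℝ) / (n : ℝ)) * x) ^ j)⁻¹ *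
        (∏' k : ℕ, (1 - (d : ℝ) * x ^ (k + n + 1))⁻¹) := by
    filter_upwards [mem_nhdsWithin_of_mem_nhds hmem, self_mem_nhdsWithin] with x hxS hxne
    rw [Set.mem_compl_iff, Set.mem_singleton_iff] at hxne
    have hsplit : (∏' i : ℕ, (1 - (d : ℝ) * x ^ (i + 1))⁻¹) =
        (∏ i ∈ Finset.range n, (1 - (d : ℝ) * x ^ (i + 1))⁻¹) *
        (∏' k : ℕ, (1 - (d : ℝ) * x ^ (k + n + 1))⁻¹) := by
      classical
      have h2 : HasProd (fun i : ℕ => if n ≤ i then (1 - (d : ℝ) * x ^ (i + 1))⁻¹ else 1)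
          (∏' k : ℕ, (1 - (d : ℝ) * x ^ (k + n + 1))⁻¹) := by
        have hinj : Function.Injective (fun k : ℕ => k + n) := fun a b h => by simpa using h
        have hone : ∀ i ∉ Set.range (fun k : ℕ => k + n),
            (if n ≤ i then (1 - (d : ℝ) * x ^ (i + 1))⁻¹ else 1) = 1 := by
          intro i hi
          rw [if_neg]
          intro h
          exact hi ⟨i - n, by simp; omega⟩
        rw [← hinj.hasProd_iff hone]
        have he : ((fun i : ℕ => if n ≤ i then (1 - (d : ℝ) * x ^ (i + 1))⁻¹ else 1) ∘
            fun k : ℕ => k + n) = fun k : ℕ => (1 - (d : ℝ) * x ^ (k + n + 1))⁻¹ := by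
          funext k
          simp only [Function.comp_apply]
          rw [if_pos (Nat.le_add_left n k)]
        rw [he]
        exact hT' x hxS
      have h1 : HasProd (fun i : ℕ => if i < n then (1 - (d : ℝ) * x ^ (i + 1))⁻¹ else 1)
          (∏ i ∈ Finset.range n, (1 - (d : ℝ) * x ^ (i + 1))⁻¹) := by
        have h := hasProd_prod_of_ne_finset_one (s := Finset.range n)
          (f := fun i : ℕ => if i < n then (1 - (d : ℝ) * x ^ (i + 1))⁻¹ else 1)
          (fun b hb => if_neg (by simpa using hb)) (L := SummationFilter.unconditional ℕ)
        rwa [Finset.prod_congr rfl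
          (fun i hi => if_pos (Finset.mem_range.1 hi))] at h
      have h3 := h1.mul h2
      have hfe : (fun i : ℕ => (if i < n then (1 - (d : ℝ) * x ^ (i + 1))⁻¹ else 1) *
          (if n ≤ i then (1 - (d : ℝ) * x ^ (i + 1))⁻¹ else 1)) =
          fun i : ℕ => (1 - (d : ℝ) * x ^ (i + 1))⁻¹ := by
        funext i
        by_cases h : i < n
        · rw [if_pos h, if_neg (not_le.2 h), mul_one]
        · rw [if_neg h, if_pos (not_lt.1 h), one_mul]
      rw [hfe] at h3
      exact h3.tprod_eq
    have hn1 : n - 1 + 1 = n := Nat.succ_pred_eq_of_pos hn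
    have hprodsplit : (∏ i ∈ Finset.range n, (1 - (d : ℝ) * x ^ (i + 1))⁻¹) =
        (∏ i ∈ Finset.range (n - 1), (1 - (d : ℝ) * x ^ (i + 1))⁻¹) *
        (1 - (d : ℝ) * x ^ n)⁻¹ := by
      conv_lhs => rw [← hn1]
      rw [Finset.prod_range_succ, hn1]
    have htn : ((d : ℝ) ^ ((1 : ℝ) / (n : ℝ)) * x) ^ n = (d : ℝ) * x ^ n := by
      rw [mul_pow]
      congr 1
      rw [← Real.rpow_natCast ((d : ℝ) ^ ((1 : ℝ) / (n : ℝ))) n, ← Real.rpow_mul hD0.le]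
      have : (1 : ℝ) / (n : ℝ) * (n : ℝ) = 1 := by field_simp
      rw [this, Real.rpow_one]
    have ht1 : (d : ℝ) ^ ((1 : ℝ) / (n : ℝ)) * x ≠ 1 := by
      intro h
      apply hxne
      have hd1n : ((d : ℝ) ^ ((1 : ℝ) / (n : ℝ))) ≠ 0 :=
        (Real.rpow_pos_of_pos hD0 _).ne'
      have hx' : x = ((d : ℝ) ^ ((1 : ℝ) / (n : ℝ)))⁻¹ := eq_inv_of_mul_eq_one_left
        (by rw [mul_comm]; exact h)
      have hx₀' : x₀ = ((d : ℝ) ^ ((1 : ℝ) / (n : ℝ)))⁻¹ := eq_inv_of_mul_eq_one_left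
        (by rw [mul_comm]; exact ht₀)
      rw [hx', hx₀']
    have hgeom : (1 : ℝ) - (d : ℝ) * x ^ n =
        (∑ j ∈ Finset.range n, ((d : ℝ) ^ ((1 : ℝ) / (n : ℝ)) * x) ^ j) *
        (1 - (d : ℝ) ^ ((1 : ℝ) / (n : ℝ)) * x) := by
      have h := geom_sum_mul ((d : ℝ) ^ ((1 : ℝ) / (n : ℝ)) * x) n
      rw [htn] at h
      linear_combination h
    have hkey : (1 - (d : ℝ) * x ^ n)⁻¹ * (1 - (d : ℝ) ^ ((1 : ℝ) / (n : ℝ)) * x) =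
        (∑ j ∈ Finset.range n, ((d : ℝ) ^ ((1 : ℝ) / (n : ℝ)) * x) ^ j)⁻¹ := by
      rw [hgeom, mul_inv, mul_assoc,
        inv_mul_cancel₀ (sub_ne_zero.2 (Ne.symm ht1)), mul_one]
    rw [hsplit, hprodsplit]
    calc (∏ i ∈ Finset.range (n - 1), (1 - (d : ℝ) * x ^ (i + 1))⁻¹) *
          (1 - (d : ℝ) * x ^ n)⁻¹ *
          (∏' k : ℕ, (1 - (d : ℝ) * x ^ (k + n + 1))⁻¹) *
          (1 - (d : ℝ) ^ ((1 : ℝ) / (n : ℝ)) * x)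
        = (∏ i ∈ Finset.range (n - 1), (1 - (d : ℝ) * x ^ (i + 1))⁻¹) *
          ((1 - (d : ℝ) * x ^ n)⁻¹ * (1 - (d : ℝ) ^ ((1 : ℝ) / (n : ℝ)) * x)) *
          (∏' k : ℕ, (1 - (d : ℝ) * x ^ (k + n + 1))⁻¹) := by ring
      _ = _ := by rw [hkey]
  -- limits of the three factors
  have c1 : Tendsto (fun x : ℝ => ∏ i ∈ Finset.range (n - 1), (1 - (d : ℝ) * x ^ (i + 1))⁻¹)
      (𝓝 x₀) (𝓝 (∏ i ∈ Finset.range (n - 1), (1 - (d : ℝ) * x₀ ^ (i + 1))⁻¹)) := by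
    apply tendsto_finset_prod
    intro i hi
    have hne : (1 : ℝ) - (d : ℝ) * x₀ ^ (i + 1) ≠ 0 := by
      rw [hdx₀ (i + 1)]
      have hilt : i + 1 < n := by
        have := Finset.mem_range.1 hi; omega
      have hlt : ((i : ℝ) + 1) / (n : ℝ) < 1 := by
        rw [div_lt_one hn0]
        exact_mod_cast hilt
      have hgt : 1 < (d : ℝ) ^ (1 - ((i + 1 : ℕ) : ℝ) / (n : ℝ)) := by
        rw [Real.one_lt_rpow_iff_of_pos hD0]
        left
        constructor
        · exact hD1
        · push_cast; linarith
      linarith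
    have hcb : ContinuousAt (fun x : ℝ => 1 - (d : ℝ) * x ^ (i + 1)) x₀ :=
      (continuous_const.sub (continuous_const.mul (continuous_pow _))).continuousAt
    exact hcb.inv₀ hne
  have c2 : Tendsto
      (fun x : ℝ => (∑ j ∈ Finset.range n, ((d : ℝ) ^ ((1 : ℝ) / (n : ℝ)) * x) ^ j)⁻¹)
      (𝓝 x₀) (𝓝 ((n : ℝ)⁻¹)) := by
    have hcont : Continuous
        (fun x : ℝ => ∑ j ∈ Finset.range n, ((d : ℝ) ^ ((1 : ℝ) / (n : ℝ)) * x) ^ j) := by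
      apply continuous_finset_sum
      intro j _
      exact (continuous_const.mul continuous_id).pow j
    have hval : (∑ j ∈ Finset.range n, ((d : ℝ) ^ ((1 : ℝ) / (n : ℝ)) * x₀) ^ j) = (n : ℝ) := by
      rw [ht₀]
      simp
    have h1 := (hcont.continuousAt (x := x₀)).inv₀ (by rw [hval]; exact hn0.ne')
    have h2 : Tendsto
        (fun x : ℝ => (∑ j ∈ Finset.range n, ((d : ℝ) ^ ((1 : ℝ) / (n : ℝ)) * x) ^ j)⁻¹)
        (𝓝 x₀) (𝓝 ((∑ j ∈ Finset.range n, ((d : ℝ) ^ ((1 : ℝ) / (n : ℝ)) * x₀) ^ j)⁻¹)) := h1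
    rwa [hval] at h2
  have hGlim := (c1.mul c2).mul hT_tendsto
  have hGlim' := hGlim.mono_left (nhdsWithin_le_nhds : 𝓝[≠] x₀ ≤ 𝓝 x₀)
  have hF := hGlim'.congr' (hFG.mono fun x hx => hx.symm)
  -- identify the limit
  have e1 : (∏ i ∈ Finset.range (n - 1), (1 - (d : ℝ) * x₀ ^ (i + 1))⁻¹) =
      (∏ k ∈ Finset.Icc 1 (n - 1), (1 - (d : ℝ) * (d : ℝ) ^ (-(k : ℝ) / (n : ℝ))))⁻¹ := by
    rw [Finset.prod_inv_distrib]
    congr 1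
    rw [← Finset.Ico_add_one_right_eq_Icc, Finset.prod_Ico_eq_prod_range]
    simp only [Nat.succ_sub_one, Nat.add_sub_cancel]
    apply Finset.prod_congr rfl
    intro i _
    rw [hx₀pow (i + 1)]
    congr 3
    push_cast
    ring
  have e3 : (∏' k : ℕ, (1 - (d : ℝ) * x₀ ^ (k + n + 1))⁻¹) =
      (∏' k : ℕ, (1 - (d : ℝ) ^ (-((k : ℝ) + 1) / (n : ℝ))))⁻¹ := by
    have hw_eq : ∀ k : ℕ, (1 - (d : ℝ) * x₀ ^ (k + n + 1)) =
        (1 - (d : ℝ) ^ (-((k : ℝ) + 1) / (n : ℝ))) := by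
      intro k
      rw [hdx₀ (k + n + 1)]
      congr 1
      congr 1
      push_cast
      field_simp
      ring
    have hsum2 : Summable (fun k : ℕ => Real.log (1 - (d : ℝ) * x₀ ^ (k + n + 1))) := by
      have h := (hlog_sum x₀ hx₀mem).neg
      simp only [Real.log_inv, neg_neg] at h
      exact h
    rw [tprod_inv_eq (fun k => hfac_pos x₀ hx₀mem k) hsum2]
    congr 1
    exact tprod_congr hw_eq
  have efinal : (∏ i ∈ Finset.range (n - 1), (1 - (d : ℝ) * x₀ ^ (i + 1))⁻¹) * (n : ℝ)⁻¹ *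
      (∏' k : ℕ, (1 - (d : ℝ) * x₀ ^ (k + n + 1))⁻¹) =
      (1 / (n : ℝ)) *
        (∏ k ∈ Finset.Icc 1 (n - 1), (1 - (d : ℝ) * (d : ℝ) ^ (-(k : ℝ) / (n : ℝ))))⁻¹ *
        (∏' k : ℕ, (1 - (d : ℝ) ^ (-((k : ℝ) + 1) / (n : ℝ))))⁻¹ := by
    rw [e1, e3, one_div]
    ring
  rwa [efinal] at hF

/-- The residue coefficient at the positive real pole `x_{n,0} = d^(-1/n)` of
`Z_d(x) = ∏_{i≥1} 1/(1 − d x^i)` factorizes as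
`c_{n,0} = (1/n) · [∏_{k=1}^{n-1} (1 − d·d^(-k/n))]⁻¹ · [∏_{k≥1} (1 − d^(-k/n))]⁻¹`,
where `c_{n,0} = lim_{x → d^(-1/n)} Z_d(x)(1 − d^(1/n) x)`; in particular for
`d = 2`, `c_{1,0} = ∏_{k≥1} (1 − 2^(-k))⁻¹`. -/
theorem stmt_19 (d n : ℕ) (hd : 2 ≤ d) (hn : 1 ≤ n) :
    Tendsto
      (fun x : ℝ =>
        (∏' i : ℕ, (1 - (d : ℝ) * x ^ (i + 1))⁻¹) * (1 - (d : ℝ) ^ ((1 : ℝ) / n) * x))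
      (𝓝[≠] ((d : ℝ) ^ (-(1 : ℝ) / n)))
      (𝓝 ((1 / (n : ℝ)) *
        (∏ k ∈ Finset.Icc 1 (n - 1), (1 - (d : ℝ) * (d : ℝ) ^ (-(k : ℝ) / n)))⁻¹ *
        (∏' k : ℕ, (1 - (d : ℝ) ^ (-((k : ℝ) + 1) / n)))⁻¹)) ∧
    Tendsto
      (fun x : ℝ => (∏' i : ℕ, (1 - 2 * x ^ (i + 1))⁻¹) * (1 - 2 * x))
      (𝓝[≠] ((1 : ℝ) / 2))
      (𝓝 (∏' k : ℕ, (1 - (2 : ℝ) ^ (-((k : ℝ) + 1)))⁻¹)) := by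
  constructor
  · exact residue_main d n hd hn
  · have h := residue_main 2 1 le_rfl le_rfl
    have hpow2 : ∀ k : ℕ, (2 : ℝ) ^ (-((k : ℝ) + 1)) = ((2 : ℝ)⁻¹) ^ (k + 1) := by
      intro k
      have hc : -((k : ℝ) + 1) = -(((k + 1 : ℕ) : ℝ)) := by push_cast; ring
      rw [hc, Real.rpow_neg (by norm_num : (0:ℝ) ≤ 2), Real.rpow_natCast, inv_pow]
    have hpos : ∀ k : ℕ, 0 < 1 - (2 : ℝ) ^ (-((k : ℝ) + 1)) := by
      intro k
      rw [hpow2 k]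
      have h1 : ((2 : ℝ)⁻¹) ^ (k + 1) ≤ (2 : ℝ)⁻¹ := by
        rw [pow_succ]
        have := pow_le_one₀ (by norm_num : (0:ℝ) ≤ 2⁻¹) (by norm_num : (2:ℝ)⁻¹ ≤ 1) (n := k)
        nlinarith
      linarith [h1]
    have hsum : Summable (fun k : ℕ => Real.log (1 - (2 : ℝ) ^ (-((k : ℝ) + 1)))) := by
      apply Summable.of_norm_bounded (g := fun k : ℕ => ((2 : ℝ)⁻¹) ^ k)
        (summable_geometric_of_lt_one (by norm_num) (by norm_num))
      intro k
      rw [Real.norm_eq_abs, hpow2 k]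
      have hck : ((2 : ℝ)⁻¹) ^ (k + 1) < 1 := by
        have := hpos k; rw [hpow2 k] at this; linarith
      have hck0 : (0:ℝ) ≤ ((2 : ℝ)⁻¹) ^ (k + 1) := by positivity
      have h1 := abs_log_one_sub_le (u := ((2 : ℝ)⁻¹) ^ (k + 1))
        (by rw [abs_of_nonneg hck0]) hck
      have h2 : ((2 : ℝ)⁻¹) ^ (k + 1) ≤ (2 : ℝ)⁻¹ := by
        rw [pow_succ]
        have := pow_le_one₀ (by norm_num : (0:ℝ) ≤ 2⁻¹) (by norm_num : (2:ℝ)⁻¹ ≤ 1) (n := k)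
        nlinarith
      have h3 : ((2 : ℝ)⁻¹) ^ (k + 1) / (1 - ((2 : ℝ)⁻¹) ^ (k + 1)) ≤
          ((2 : ℝ)⁻¹) ^ (k + 1) / (2 : ℝ)⁻¹ :=
        div_le_div_of_nonneg_left hck0 (by norm_num) (by linarith)
      have h4 : ((2 : ℝ)⁻¹) ^ (k + 1) / (2 : ℝ)⁻¹ = ((2 : ℝ)⁻¹) ^ k := by
        rw [pow_succ]; field_simp
      linarith
    have hinv : (∏' k : ℕ, (1 - (2 : ℝ) ^ (-((k : ℝ) + 1)))⁻¹) =
        (∏' k : ℕ, (1 - (2 : ℝ) ^ (-((k : ℝ) + 1))))⁻¹ := tprod_inv_eq hpos hsum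
    rw [hinv]
    have e1 : ((2 : ℕ) : ℝ) = (2 : ℝ) := by norm_num
    have e2 : (((1 : ℕ)) : ℝ) = (1 : ℝ) := by norm_num
    simp only [e1, e2, div_one, Real.rpow_one] at h
    have e3 : (2 : ℝ) ^ (-(1 : ℝ)) = (1 : ℝ) / 2 := by
      rw [Real.rpow_neg_one]; norm_num
    rw [e3] at h
    simpa using h
end
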